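/- (1) For every s ∈ S, the trace tr(s ⊗ 1) ∈ K lies in (the image of) R. (2) If I ⊆ R is an integrally closed ideal and s ∈ S is integral over I (i.e. s^n + a_1 s^{n−1} + ⋯ + a_n = 0 for some n ≥ 1 with a_i ∈ I^i), then tr(s ⊗ 1) ∈ I. -/

import Mathlib

open TensorProduct

/-- `s ∈ S` is integral over the ideal `I ⊆ R`: it satisfies an equation
`s^n + a₁ s^{n−1} + ⋯ + aₙ = 0` with `aᵢ ∈ I^i`. -/
def IsIntegralOverIdeal {R S : Type*} [CommRing R] [CommRing S] [Algebra R S]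
    (I : Ideal R) (s : S) : Prop :=
  ∃ n : ℕ, 0 < n ∧ ∃ a : Fin n → R,
    (∀ i : Fin n, a i ∈ I ^ ((i : ℕ) + 1)) ∧
    s ^ n + ∑ i : Fin n, algebraMap R S (a i) * s ^ (n - ((i : ℕ) + 1)) = 0

/-- reindexing of sums -/
lemma sum_fin_reflect {M : Type*} [AddCommMonoid M] (n : ℕ) (f : ℕ → M) :
    ∑ j : Fin n, f (n - ((j : ℕ) + 1)) = ∑ i ∈ Finset.range n, f i := by
  rw [Fin.sum_univ_eq_sum_range (fun j => f (n - (j + 1)))]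
  rw [← Finset.sum_range_reflect]
  refine Finset.sum_congr rfl fun j hj => ?_
  have hj' := Finset.mem_range.1 hj
  congr 1
  omega

open Polynomial in
lemma monic_aux {A : Type*} [CommRing A] {n : ℕ} (hn : 0 < n) (c : Fin n → A) :
    (X ^ n + ∑ i : Fin n, C (c i) * X ^ (n - ((i : ℕ) + 1))).Monic := by
  apply monic_X_pow_add
  apply lt_of_le_of_lt (degree_sum_le _ _)
  rw [Finset.sup_lt_iff (by exact_mod_cast WithBot.bot_lt_coe n)]
  intro i _
  refine lt_of_le_of_lt (degree_C_mul_X_pow_le _ _) ?_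
  exact_mod_cast Nat.sub_lt hn (Nat.succ_pos _)

open Polynomial in
lemma aeval_aux {A B : Type*} [CommRing A] [CommRing B] [Algebra A B] {n : ℕ}
    (c : Fin n → A) (y : B) :
    Polynomial.aeval y (X ^ n + ∑ i : Fin n, C (c i) * X ^ (n - ((i : ℕ) + 1)))
      = y ^ n + ∑ i : Fin n, algebraMap A B (c i) * y ^ (n - ((i : ℕ) + 1)) := by
  simp [map_add, map_pow, map_sum, map_mul]

/-- an element integral over an ideal is integral over the ring -/
lemma IsIntegralOverIdeal.isIntegral {R S : Type*} [CommRing R] [CommRing S] [Algebra R S]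
    {I : Ideal R} {y : S} (h : IsIntegralOverIdeal I y) : IsIntegral R y := by
  obtain ⟨n, hn, a, _, heq⟩ := h
  exact ⟨_, monic_aux hn a, by rw [← Polynomial.aeval_def, aeval_aux, heq]⟩

open Polynomial in
lemma isIntegralOverIdeal_of_monic {R S : Type*} [CommRing R] [CommRing S] [Algebra R S]
    {y : S} {p : R[X]} (hp : p.Monic) (hdeg : 0 < p.natDegree)
    (h0 : Polynomial.aeval y p = 0) :
    IsIntegralOverIdeal (⊤ : Ideal R) y := by
  refine ⟨p.natDegree, hdeg, fun i => p.coeff (p.natDegree - ((i : ℕ) + 1)),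
    fun i => by simp [Ideal.top_pow], ?_⟩
  have hsum := Polynomial.aeval_eq_sum_range (R := R) (p := p) y
  rw [h0, Finset.sum_range_succ, hp.coeff_natDegree, one_smul] at hsum
  rw [sum_fin_reflect p.natDegree (fun i => algebraMap R S (p.coeff i) * y ^ i)]
  have h2 : ∑ i ∈ Finset.range p.natDegree, algebraMap R S (p.coeff i) * y ^ i
      = ∑ i ∈ Finset.range p.natDegree, p.coeff i • y ^ i :=
    Finset.sum_congr rfl fun i _ => (Algebra.smul_def _ _).symm
  rw [h2, add_comm]
  exact hsum.symm

/-- integrality over an ideal transfers along algebra maps -/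
lemma IsIntegralOverIdeal.map {R S B : Type*} [CommRing R] [CommRing S] [CommRing B]
    [Algebra R S] [Algebra R B] {I : Ideal R} (f : S →ₐ[R] B) {s : S}
    (h : IsIntegralOverIdeal I s) : IsIntegralOverIdeal I (f s) := by
  obtain ⟨n, hn, a, ha, heq⟩ := h
  refine ⟨n, hn, a, ha, ?_⟩
  have := congrArg f heq
  simpa [map_add, map_pow, map_sum, map_mul, f.commutes] using this

/-- integrality over an ideal descends along injective algebra maps -/
lemma IsIntegralOverIdeal.of_map {R S B : Type*} [CommRing R] [CommRing S] [CommRing B]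
    [Algebra R S] [Algebra R B] {I : Ideal R} (f : S →ₐ[R] B)
    (hf : Function.Injective f) {s : S}
    (h : IsIntegralOverIdeal I (f s)) : IsIntegralOverIdeal I s := by
  obtain ⟨n, hn, a, ha, heq⟩ := h
  refine ⟨n, hn, a, ha, hf ?_⟩
  rw [map_zero, ← heq]
  simp [map_add, map_pow, map_sum, map_mul, f.commutes]

open Polynomial in
/-- every root of the characteristic polynomial of `M` is a root of every polynomial
annihilating `M`. -/
lemma eval_eq_zero_of_root_charpoly {L : Type*} [Field L] {ι : Type*} [Fintype ι]
    [DecidableEq ι] (M : Matrix ι ι L) (q : L[X]) (hq : Polynomial.aeval M q = 0)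
    {μ : L} (hμ : μ ∈ M.charpoly.roots) : q.eval μ = 0 := by
  have hroot : M.charpoly.eval μ = 0 := (Polynomial.mem_roots'.1 hμ).2
  have hdet : (Matrix.scalar ι μ - M).det = 0 := by
    rw [Matrix.charpoly, eval_det, Matrix.matPolyEquiv_charmatrix] at hroot
    rwa [Polynomial.eval_sub, Polynomial.eval_X, Polynomial.eval_C] at hroot
  obtain ⟨v, hv, hv0⟩ := (Matrix.exists_mulVec_eq_zero_iff).2 hdet
  have hMv : M.mulVec v = μ • v := by
    have h1 : (Matrix.scalar ι μ).mulVec v = μ • v := by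
      ext i
      simp [Matrix.scalar_apply, Matrix.mulVec_diagonal]
    rw [Matrix.sub_mulVec, h1, sub_eq_zero] at hv0
    exact hv0.symm
  set f : Module.End L (ι → L) := Matrix.toLinAlgEquiv' M with hf
  have hev : f.HasEigenvector μ v := by
    refine ⟨Module.End.mem_eigenspace_iff.2 ?_, hv⟩
    show Matrix.toLinAlgEquiv' M v = μ • v
    rw [Matrix.toLinAlgEquiv'_apply]
    exact hMv
  have h1 : Polynomial.aeval f q v = q.eval μ • v :=
    Module.End.aeval_apply_of_hasEigenvector hev
  have h2 : Polynomial.aeval f q = 0 := by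
    have h3 := Polynomial.aeval_algHom_apply
      (Matrix.toLinAlgEquiv' (R := L) (n := ι)).toAlgHom M q
    rw [hq, map_zero] at h3
    exact h3
  rw [h2] at h1
  simp only [LinearMap.zero_apply] at h1
  rcases smul_eq_zero.1 h1.symm with h | h
  · exact h
  · exact absurd h hv

open Polynomial in
/-- if `μ` satisfies a monic equation with coefficients in powers of `I`, then `C μ * X` is
integral over the image of the Rees algebra of `I`. -/
lemma CmulX_isIntegral {R L : Type*} [CommRing R] [Field L] [Algebra R L] (I : Ideal R)
    {n : ℕ} (hn : 0 < n) (a : Fin n → R) (ha : ∀ i : Fin n, a i ∈ I ^ ((i : ℕ) + 1)) {μ : L}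
    (hμ : μ ^ n + ∑ i : Fin n, algebraMap R L (a i) * μ ^ (n - ((i : ℕ) + 1)) = 0) :
    IsIntegral ((reesAlgebra I).map (Polynomial.mapAlgHom (Algebra.ofId R L)) :
      Subalgebra R L[X]) (C μ * X) := by
  set A : Subalgebra R L[X] := (reesAlgebra I).map (Polynomial.mapAlgHom (Algebra.ofId R L))
    with hA
  have hmem : ∀ i : Fin n, (C (algebraMap R L (a i)) * X ^ ((i : ℕ) + 1)) ∈ A := by
    intro i
    refine ⟨C (a i) * X ^ ((i : ℕ) + 1), (mem_reesAlgebra_iff _ _).2 fun k => ?_, ?_⟩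
    · rw [coeff_C_mul, coeff_X_pow]
      by_cases h : k = (i : ℕ) + 1
      · subst h; simpa using ha i
      · simp [h]
    · simp [Polynomial.coe_mapAlgHom, Polynomial.map_mul, Polynomial.map_pow,
        Polynomial.map_C, Polynomial.map_X, Algebra.ofId_apply]
  let c : Fin n → A := fun i => ⟨_, hmem i⟩
  refine ⟨X ^ n + ∑ i : Fin n, Polynomial.C (c i) * X ^ (n - ((i : ℕ) + 1)),
    monic_aux hn c, ?_⟩
  rw [← Polynomial.aeval_def, aeval_aux]
  have hterm : ∀ i : Fin n,
      algebraMap A L[X] (c i) * (C μ * X) ^ (n - ((i : ℕ) + 1))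
        = C (algebraMap R L (a i) * μ ^ (n - ((i : ℕ) + 1))) * X ^ n := by
    intro i
    have hexp : (i : ℕ) + 1 + (n - ((i : ℕ) + 1)) = n := by
      have := i.isLt; omega
    have hval : algebraMap A L[X] (c i)
        = C (algebraMap R L (a i)) * X ^ ((i : ℕ) + 1) := rfl
    rw [hval, mul_pow, ← Polynomial.C_pow, map_mul]
    conv_rhs => rw [show (X : L[X]) ^ n = X ^ ((i : ℕ) + 1) * X ^ (n - ((i : ℕ) + 1)) by
      rw [← pow_add, hexp]]
    ring
  rw [Finset.sum_congr rfl fun i _ => hterm i, mul_pow, ← Polynomial.C_pow,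
    ← Finset.sum_mul, ← add_mul, ← map_sum, ← map_add, hμ, map_zero, zero_mul]

open Polynomial in
/-- Key lemma: if `x` in a finite-dimensional algebra `B` over a field `K` is integral over an
ideal `I` of `R`, then the trace of `x` (pushed into an algebraically closed field `L`) is
integral over `I`. -/
lemma trace_isIntegralOverIdeal {R K L B : Type*} [CommRing R]
    [Field K] [Field L] [IsAlgClosed L] [CommRing B]
    [Algebra R K] [Algebra K L] [Algebra R L] [IsScalarTower R K L]
    [Algebra K B] [Algebra R B] [IsScalarTower R K B] [Module.Finite K B]
    (I : Ideal R) (x : B) (hx : IsIntegralOverIdeal I x) :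
    IsIntegralOverIdeal I (algebraMap K L (Algebra.trace K B x)) := by
  classical
  obtain ⟨n, hn, a, ha, heq⟩ := hx
  let b : Module.Basis (Fin (Module.finrank K B)) K B := Module.finBasis K B
  set ι := Fin (Module.finrank K B) with hι
  let ψ : B →+* Matrix ι ι L :=
    ((algebraMap K L).mapMatrix).comp (Algebra.leftMulMatrix b).toRingHom
  set M : Matrix ι ι L := ψ x with hM
  have htr : M.trace = algebraMap K L (Algebra.trace K B x) := by
    rw [Algebra.trace_eq_matrix_trace b x]
    simp only [hM, ψ, RingHom.coe_comp, Function.comp_apply, RingHom.mapMatrix_apply,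
      Matrix.trace, Matrix.diag, Matrix.map_apply, AlgHom.toRingHom_eq_coe, RingHom.coe_coe]
    rw [map_sum]
  have hψa : ∀ r : R, ψ (algebraMap R B r) = Matrix.scalar ι (algebraMap R L r) := by
    intro r
    rw [IsScalarTower.algebraMap_apply R K B r]
    show ((algebraMap K L).mapMatrix)
      ((Algebra.leftMulMatrix b) (algebraMap K B (algebraMap R K r))) = _
    rw [AlgHom.commutes, Matrix.algebraMap_eq_diagonal, RingHom.mapMatrix_apply,
      Matrix.diagonal_map (map_zero _), Matrix.scalar_apply]
    funext i
    simp [← IsScalarTower.algebraMap_apply R K L]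
  have hMeq : M ^ n + ∑ i : Fin n,
      Matrix.scalar ι (algebraMap R L (a i)) * M ^ (n - ((i : ℕ) + 1)) = 0 := by
    have h := congrArg ψ heq
    simpa only [map_add, map_pow, map_sum, map_mul, map_zero, hψa] using h
  set q : L[X] := X ^ n + ∑ i : Fin n, C (algebraMap R L (a i)) * X ^ (n - ((i : ℕ) + 1))
    with hq
  have haeval : Polynomial.aeval M q = 0 := by
    have hC : ∀ cc : L, Polynomial.aeval M (C cc) = Matrix.scalar ι cc := by
      intro cc
      rw [Polynomial.aeval_C]
      rw [Matrix.algebraMap_eq_diagonal, Matrix.scalar_apply]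
      congr 1
    simp only [hq, map_add, map_pow, map_sum, map_mul, Polynomial.aeval_X, hC]
    exact hMeq
  have hroots : ∀ μ ∈ M.charpoly.roots,
      μ ^ n + ∑ i : Fin n, algebraMap R L (a i) * μ ^ (n - ((i : ℕ) + 1)) = 0 := by
    intro μ hμ
    have h := eval_eq_zero_of_root_charpoly M q haeval hμ
    simpa only [hq, eval_add, eval_pow, eval_X, eval_finset_sum, eval_mul, eval_C] using h
  set A : Subalgebra R L[X] := (reesAlgebra I).map (Polynomial.mapAlgHom (Algebra.ofId R L))
    with hA
  have hTroots : ((M.charpoly.roots).map (fun μ => C μ * X)).sum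
      = C (M.charpoly.roots.sum) * X := by
    rw [Multiset.sum_map_mul_right, ← map_multiset_sum (C : L →+* L[X])]
  have hT : IsIntegral A (C (algebraMap K L (Algebra.trace K B x)) * X) := by
    have h1 : algebraMap K L (Algebra.trace K B x) = M.charpoly.roots.sum := by
      rw [← htr, Matrix.trace_eq_sum_roots_charpoly]
    rw [h1, ← hTroots]
    rw [← mem_integralClosure_iff]
    refine Subalgebra.multiset_sum_mem _ fun z hz => ?_
    obtain ⟨μ, hμ, rfl⟩ := Multiset.mem_map.1 hz
    exact (mem_integralClosure_iff A L[X]).2 (CmulX_isIntegral I hn a ha (hroots μ hμ))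
  obtain ⟨Q, hQm, hQ0⟩ := hT
  set T := algebraMap K L (Algebra.trace K B x) with hTdef
  set m := Q.natDegree with hmdef
  have hm : 0 < m := by
    rcases Nat.eq_zero_or_pos m with h | h
    · exfalso
      have hQ1 : Q = 1 := (Polynomial.Monic.natDegree_eq_zero hQm).1 h
      rw [hQ1] at hQ0
      simp at hQ0
    · exact h
  have hchoice : ∀ i : ℕ, ∃ r : R, r ∈ I ^ (m - i) ∧
      algebraMap R L r = ((Q.coeff i : L[X])).coeff (m - i) := by
    intro i
    obtain ⟨g, hg, hgeq⟩ := Subalgebra.mem_map.1 (Q.coeff i).2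
    refine ⟨g.coeff (m - i), (mem_reesAlgebra_iff I g).1 hg _, ?_⟩
    rw [← hgeq, Polynomial.coe_mapAlgHom, Polynomial.coeff_map]
    rfl
  choose c hcI hcval using hchoice
  have hsmul : ∀ (cc : A) (w : L[X]), cc • w = (cc : L[X]) * w := fun cc w => by
    rw [Algebra.smul_def, Subalgebra.algebraMap_eq]
    simp
  have hips : (0 : L[X]) = ∑ i ∈ Finset.range (m + 1),
      ((Q.coeff i : L[X])) * (C T * X) ^ i := by
    have h := Polynomial.aeval_eq_sum_range (R := A) (p := Q) (C T * X)
    rw [Polynomial.aeval_def, hQ0] at h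
    rw [h]
    exact Finset.sum_congr rfl fun i _ => hsmul _ _
  have hkey : (0 : L) = ∑ i ∈ Finset.range (m + 1), algebraMap R L (c i) * T ^ i := by
    have h2 := congrArg (fun P : L[X] => P.coeff m) hips
    simp only [Polynomial.coeff_zero, Polynomial.finset_sum_coeff] at h2
    rw [h2]
    refine Finset.sum_congr rfl fun i hi => ?_
    have him : i ≤ m := Nat.lt_succ_iff.1 (Finset.mem_range.1 hi)
    rw [mul_pow, ← Polynomial.C_pow, ← mul_assoc, Polynomial.coeff_mul_X_pow', if_pos him,
      Polynomial.coeff_mul_C, hcval i]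
  rw [Finset.sum_range_succ] at hkey
  have htop : algebraMap R L (c m) * T ^ m = T ^ m := by
    have h1 : ((Q.coeff m : L[X])).coeff 0 = 1 := by
      have hc1 : Q.coeff m = 1 := hQm.coeff_natDegree
      rw [hc1]
      simp
    rw [hcval m, Nat.sub_self, h1, one_mul]
  rw [htop] at hkey
  refine ⟨m, hm, fun j => c (m - ((j : ℕ) + 1)), fun j => ?_, ?_⟩
  · have hj : (j : ℕ) + 1 ≤ m := j.isLt
    have h := hcI (m - ((j : ℕ) + 1))
    rwa [Nat.sub_sub_self hj] at h
  · rw [sum_fin_reflect m (fun i => algebraMap R L (c i) * T ^ i), add_comm]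
    exact hkey.symm

theorem stmt_5 (R : Type u) [CommRing R] [IsDomain R] [IsIntegrallyClosed R]
    (K : Type u) [Field K] [Algebra R K] [IsFractionRing R K]
    (S : Type u) [CommRing S] [Algebra R S] [Module.Finite R S]
    [Module.Finite K (K ⊗[R] S)] [Algebra.Etale K (K ⊗[R] S)] :
    (∀ s : S,
      Algebra.trace K (K ⊗[R] S) ((1 : K) ⊗ₜ[R] s) ∈ (algebraMap R K).range) ∧
    ∀ I : Ideal R, (∀ x : R, IsIntegralOverIdeal I x → x ∈ I) →
      ∀ s : S, IsIntegralOverIdeal I s →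
        ∃ r ∈ I, Algebra.trace K (K ⊗[R] S) ((1 : K) ⊗ₜ[R] s) = algebraMap R K r := by
  classical
  set L := AlgebraicClosure K with hL
  have hinjKL : Function.Injective (algebraMap K L) := (algebraMap K L).injective
  have hinjRL : Function.Injective (algebraMap R L) := by
    rw [IsScalarTower.algebraMap_eq R K L]
    exact hinjKL.comp (IsFractionRing.injective R K)
  have part1 : ∀ s : S, ∃ r : R,
      algebraMap R K r = Algebra.trace K (K ⊗[R] S) ((1 : K) ⊗ₜ[R] s) := by
    intro s
    have hs : IsIntegral R s := IsIntegral.of_finite R s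
    obtain ⟨p, hp, hp0⟩ := hs
    have h1 : IsIntegralOverIdeal (⊤ : Ideal R) s := by
      refine isIntegralOverIdeal_of_monic (hp.mul Polynomial.monic_X) ?_ ?_
      · rw [Polynomial.natDegree_mul_X hp.ne_zero]
        omega
      · rw [map_mul, Polynomial.aeval_def, hp0, zero_mul]
    have h2 : IsIntegralOverIdeal (⊤ : Ideal R) ((1 : K) ⊗ₜ[R] s : K ⊗[R] S) := by
      have h := h1.map (Algebra.TensorProduct.includeRight (R := R) (A := K) (B := S))
      simpa using h
    have h3 := trace_isIntegralOverIdeal (K := K) (L := L) ⊤ _ h2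
    have h5 : IsIntegral R (Algebra.trace K (K ⊗[R] S) ((1 : K) ⊗ₜ[R] s)) :=
      (isIntegral_algebraMap_iff hinjKL).1 h3.isIntegral
    exact IsIntegrallyClosed.isIntegral_iff.1 h5
  constructor
  · intro s
    obtain ⟨r, hr⟩ := part1 s
    exact ⟨r, hr⟩
  · intro I hI s hs
    obtain ⟨r, hr⟩ := part1 s
    have h2 : IsIntegralOverIdeal I ((1 : K) ⊗ₜ[R] s : K ⊗[R] S) := by
      have h := hs.map (Algebra.TensorProduct.includeRight (R := R) (A := K) (B := S))
      simpa using h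
    have h3 := trace_isIntegralOverIdeal (K := K) (L := L) I _ h2
    rw [← hr, ← IsScalarTower.algebraMap_apply R K L] at h3
    have h5 : IsIntegralOverIdeal I r :=
      IsIntegralOverIdeal.of_map (Algebra.ofId R L) hinjRL h3
    exact ⟨r, hI r h5, hr.symm⟩
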